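/- arXiv:2204.00647 — 2 statements merged into one kernel-verified Lean document; each statement's English description precedes it below -/
import Mathlib

section
/- Let n ≥ 1, L > 0, μ ≤ 0, and let f : ℝⁿ → ℝ belong to F_{μ,L}. Let x⋆ be the unique global minimizer of f, with f⋆ = f(x⋆), let x¹ ∈ ℝⁿ, and suppose the sublevel set X = {x : f(x) ≤ f(x¹)} is star convex at x⋆. If f is (γ, μ_s)-quasar-convex on X with respect to x⋆, for some γ ∈ (0, 1] and μ_s ≥ 0, then f(x) − f⋆ ≥ (γ μ_s/4) ‖x − x⋆‖² for every x ∈ X. -/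
open Set
open scoped RealInnerProductSpace

theorem stmt_18 (n : ℕ) (hn : 1 ≤ n)
    (f : EuclideanSpace ℝ (Fin n) → ℝ)
    (f' : EuclideanSpace ℝ (Fin n) → EuclideanSpace ℝ (Fin n))
    (L μ : ℝ) (hL : 0 < L) (hμ : μ ≤ 0)
    (hgrad : ∀ x, HasGradientAt f (f' x) x)
    (hupper : ConvexOn ℝ univ (fun x => L / 2 * ‖x‖ ^ 2 - f x))
    (hlower : ConvexOn ℝ univ (fun x => f x - μ / 2 * ‖x‖ ^ 2))
    (xstar : EuclideanSpace ℝ (Fin n)) (hmin : ∀ z, f xstar ≤ f z)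
    (huniq : ∀ y, (∀ z, f y ≤ f z) → y = xstar)
    (x1 : EuclideanSpace ℝ (Fin n))
    (hstarconv : ∀ x, f x ≤ f x1 → ∀ lam ∈ Icc (0 : ℝ) 1,
      f (lam • x + (1 - lam) • xstar) ≤ f x1)
    (γ μs : ℝ) (hγ : γ ∈ Ioc (0 : ℝ) 1) (hμs : 0 ≤ μs)
    (hqsc : ∀ x, f x ≤ f x1 →
      f x + (1 / γ) * ⟪f' x, xstar - x⟫ + μs / 2 * ‖xstar - x‖ ^ 2 ≤ f xstar) :
    ∀ x, f x ≤ f x1 → γ * μs / 4 * ‖x - xstar‖ ^ 2 ≤ f x - f xstar := by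
  intro x hx
  obtain ⟨hγ0, hγ1⟩ := hγ
  set D := ‖x - xstar‖ ^ 2 with hD
  have hD0 : 0 ≤ D := by positivity
  set c : ℝ → EuclideanSpace ℝ (Fin n) := fun t => xstar + t • (x - xstar) with hc
  have hcd : ∀ t : ℝ, HasDerivAt c (x - xstar) t := by
    intro t
    have h : HasDerivAt (fun t : ℝ => t • (x - xstar)) ((1:ℝ) • (x - xstar)) t :=
      (hasDerivAt_id t).smul_const _
    simpa [hc] using h.const_add xstar
  have hce : ∀ t : ℝ, c t = t • x + (1 - t) • xstar := by
    intro t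
    simp only [hc]
    module
  have hmem : ∀ t ∈ Icc (0:ℝ) 1, f (c t) ≤ f x1 := by
    intro t ht
    rw [hce t]
    exact hstarconv x hx t ht
  set φ : ℝ → ℝ := fun t => f (c t) - γ * μs * D / 4 * t ^ 2 with hφ
  have hφd : ∀ t : ℝ,
      HasDerivAt φ (⟪f' (c t), x - xstar⟫ - γ * μs * D / 4 * (2 * t)) t := by
    intro t
    have h1 : HasDerivAt (fun t => f (c t)) (⟪f' (c t), x - xstar⟫) t := by
      have h := (hgrad (c t)).hasFDerivAt.comp_hasDerivAt t (hcd t)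
      simp at h
      exact h
    have h2 : HasDerivAt (fun t : ℝ => γ * μs * D / 4 * t ^ 2)
        (γ * μs * D / 4 * (2 * t)) t := by
      have := (hasDerivAt_pow 2 t).const_mul (γ * μs * D / 4)
      simpa [mul_comm, mul_assoc, mul_left_comm] using this
    exact h1.sub h2
  have hkey : ∀ t ∈ Ioo (0:ℝ) 1,
      0 ≤ ⟪f' (c t), x - xstar⟫ - γ * μs * D / 4 * (2 * t) := by
    intro t ht
    have hq := hqsc (c t) (hmem t ⟨ht.1.le, ht.2.le⟩)
    have hsub : xstar - c t = (-t) • (x - xstar) := by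
      simp only [hc]; module
    have hinner : ⟪f' (c t), xstar - c t⟫ = -t * ⟪f' (c t), x - xstar⟫ := by
      rw [hsub, real_inner_smul_right]
    have hnorm : ‖xstar - c t‖ ^ 2 = t ^ 2 * D := by
      rw [hsub, norm_smul]
      simp [abs_of_pos ht.1, hD, mul_pow]
    rw [hinner, hnorm] at hq
    have hfl := hmin (c t)
    -- from hq: f (c t) + (1/γ) * (-t * I) + μs/2 * (t^2 * D) ≤ f xstar ≤ f (c t)
    -- so (t/γ) * I ≥ μs/2 * t^2 * D, i.e. I ≥ γ * μs * t * D / 2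
    set I : ℝ := ⟪f' (c t), x - xstar⟫ with hI
    have hle : μs / 2 * (t ^ 2 * D) ≤ (t * I) / γ := by
      have e : 1 / γ * (-t * I) = -((t * I) / γ) := by ring
      rw [e] at hq
      linarith
    have h1 : γ * (μs / 2 * (t ^ 2 * D)) ≤ t * I :=
      (le_div_iff₀' hγ0).mp hle
    have h2 : t * (γ * μs * D / 2 * t) ≤ t * I := by nlinarith
    have h3 : γ * μs * D / 2 * t ≤ I := le_of_mul_le_mul_left h2 ht.1
    linarith
  have hmono : MonotoneOn φ (Icc (0:ℝ) 1) := by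
    apply monotoneOn_of_deriv_nonneg (convex_Icc 0 1)
    · exact Continuous.continuousOn (by
        have : Differentiable ℝ φ := fun t => (hφd t).differentiableAt
        exact this.continuous)
    · intro t _
      exact (hφd t).differentiableAt.differentiableWithinAt
    · intro t ht
      rw [interior_Icc] at ht
      rw [(hφd t).deriv]
      exact hkey t ht
  have h01 := hmono (left_mem_Icc.mpr zero_le_one) (right_mem_Icc.mpr zero_le_one)
    zero_le_one
  have hc0 : c 0 = xstar := by simp [hc]
  have hc1 : c 1 = x := by simp [hc]
  simp only [hφ, hc0, hc1] at h01
  nlinarith [h01]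
end

section
/- Let n ≥ 1, L > 0, and let f : ℝⁿ → ℝ belong to F_{−L,L} (in particular, any L-smooth function) with a global minimizer x⋆ and minimum value f⋆. Suppose f is (γ, μ_s)-quasar-convex with respect to x⋆ on the sublevel set X = {x : f(x) ≤ f(x¹)} of a point x¹ ∈ ℝⁿ, for some γ ∈ (0, 1] and μ_s > 0 with μ_s γ² ≤ L. If x² = x¹ − (1/L)∇f(x¹), then f(x²) − f⋆ ≤ ((2L − 2μ_s γ²)/(2L + μ_s γ²)) · (f(x¹) − f⋆). -/
open Set
open scoped RealInnerProductSpace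

set_option linter.unusedSectionVars false
set_option maxHeartbeats 1000000

section aux

variable {E : Type*} [NormedAddCommGroup E] [InnerProductSpace ℝ E] [CompleteSpace E]

/-- Supporting hyperplane inequality for a convex function, with the directional
derivative supplied explicitly. -/
lemma convex_dir_deriv_le {φ : E → ℝ} (hconv : ConvexOn ℝ univ φ) (x y : E) {D : ℝ}
    (hD : HasDerivAt (fun t : ℝ => φ (x + t • (y - x))) D 0) :
    φ x + D ≤ φ y := by
  set ψ : ℝ → ℝ := fun t => φ (x + t • (y - x)) with hψ
  have h0 : ψ 0 = φ x := by simp [hψ]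
  have hslope : ∀ t ∈ Ioc (0:ℝ) 1, slope ψ 0 t ≤ φ y - φ x := by
    intro t ht
    have hpt : x + t • (y - x) = (1 - t) • x + t • y := by module
    have hcv := hconv.2 (mem_univ x) (mem_univ y) (by linarith [ht.2] : (0:ℝ) ≤ 1 - t)
      ht.1.le (by ring)
    have hψt : ψ t ≤ (1 - t) * φ x + t * φ y := by
      rw [hψ]; simpa [hpt] using hcv
    rw [slope_def_field, sub_zero, div_le_iff₀ ht.1]
    nlinarith [ht.1]
  have htend : Filter.Tendsto (slope ψ 0) (nhdsWithin 0 (Ioi 0)) (nhds D) := by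
    have h1 : HasDerivWithinAt ψ D (Ioi 0) 0 := hD.hasDerivWithinAt
    rw [hasDerivWithinAt_iff_tendsto_slope] at h1
    have heq : Ioi (0:ℝ) \ {0} = Ioi 0 := diff_singleton_eq_self (by simp)
    rwa [heq] at h1
  have hle : D ≤ φ y - φ x := by
    refine le_of_tendsto htend ?_
    filter_upwards [Ioc_mem_nhdsGT_of_mem (by constructor <;> norm_num : (0:ℝ) ∈ Ico (0:ℝ) 1)]
      with t ht using hslope t ht
  linarith

lemma hasDerivAt_line (x y : E) : HasDerivAt (fun t : ℝ => x + t • (y - x)) (y - x) 0 := by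
  simpa using (((hasDerivAt_id (0:ℝ)).smul_const (y - x)).const_add x)

lemma hasDerivAt_f_line {f : E → ℝ} {g : E} (x y : E) (hg : HasGradientAt f g x) :
    HasDerivAt (fun t : ℝ => f (x + t • (y - x))) ⟪g, y - x⟫ 0 := by
  have hc := hasDerivAt_line x y
  have hx0 : x + (0:ℝ) • (y - x) = x := by simp
  have hf : HasFDerivAt f (InnerProductSpace.toDual ℝ E g) (x + (0:ℝ) • (y - x)) := by
    rw [hx0]; exact hg.hasFDerivAt
  have := hf.comp_hasDerivAt 0 hc
  simp only [InnerProductSpace.toDual_apply_apply] at this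
  exact this

lemma hasDerivAt_normsq_line (x y : E) :
    HasDerivAt (fun t : ℝ => ‖x + t • (y - x)‖ ^ 2) (2 * ⟪x, y - x⟫) 0 := by
  have hfun : (fun t : ℝ => ‖x + t • (y - x)‖ ^ 2)
      = fun t : ℝ => ‖x‖ ^ 2 + 2 * ⟪x, y - x⟫ * t + ‖y - x‖ ^ 2 * t ^ 2 := by
    funext t
    rw [norm_add_sq_real, real_inner_smul_right, norm_smul]
    simp only [Real.norm_eq_abs, mul_pow, sq_abs]
    ring
  rw [hfun]
  have h1 : HasDerivAt (fun t : ℝ => ‖x‖ ^ 2 + 2 * ⟪x, y - x⟫ * t) (2 * ⟪x, y - x⟫) 0 := by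
    simpa using ((hasDerivAt_id (0:ℝ)).const_mul (2 * ⟪x, y - x⟫)).const_add (‖x‖ ^ 2)
  have h2 : HasDerivAt (fun t : ℝ => ‖y - x‖ ^ 2 * t ^ 2) 0 0 := by
    simpa using (hasDerivAt_pow 2 (0:ℝ)).const_mul (‖y - x‖ ^ 2)
  have h := h1.add h2
  simp only [add_zero] at h
  exact h

end aux

theorem stmt_19 (n : ℕ) (hn : 1 ≤ n)
    (f : EuclideanSpace ℝ (Fin n) → ℝ)
    (f' : EuclideanSpace ℝ (Fin n) → EuclideanSpace ℝ (Fin n))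
    (L : ℝ) (hL : 0 < L)
    (hgrad : ∀ x, HasGradientAt f (f' x) x)
    (hupper : ConvexOn ℝ univ (fun x => L / 2 * ‖x‖ ^ 2 - f x))
    (hlower : ConvexOn ℝ univ (fun x => f x - (-L) / 2 * ‖x‖ ^ 2))
    (xstar : EuclideanSpace ℝ (Fin n)) (hmin : ∀ z, f xstar ≤ f z)
    (x1 : EuclideanSpace ℝ (Fin n))
    (γ μs : ℝ) (hγ : γ ∈ Ioc (0 : ℝ) 1) (hμs : 0 < μs) (hμsL : μs * γ ^ 2 ≤ L)
    (hqsc : ∀ x, f x ≤ f x1 →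
      f x + (1 / γ) * ⟪f' x, xstar - x⟫ + μs / 2 * ‖xstar - x‖ ^ 2 ≤ f xstar)
    (x2 : EuclideanSpace ℝ (Fin n)) (hx2 : x2 = x1 - (1 / L) • f' x1) :
    f x2 - f xstar ≤
      (2 * L - 2 * μs * γ ^ 2) / (2 * L + μs * γ ^ 2) * (f x1 - f xstar) := by
  obtain ⟨hγ0, hγ1⟩ := hγ
  have hLne : L ≠ 0 := ne_of_gt hL
  have hγne : γ ≠ 0 := ne_of_gt hγ0
  -- Basic smoothness inequalities
  have hUp : ∀ a b : EuclideanSpace ℝ (Fin n),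
      f b ≤ f a + ⟪f' a, b - a⟫ + L / 2 * ‖b - a‖ ^ 2 := by
    intro a b
    have hD : HasDerivAt (fun t : ℝ => L / 2 * ‖a + t • (b - a)‖ ^ 2 - f (a + t • (b - a)))
        (L / 2 * (2 * ⟪a, b - a⟫) - ⟪f' a, b - a⟫) 0 :=
      ((hasDerivAt_normsq_line a b).const_mul (L / 2)).sub (hasDerivAt_f_line a b (hgrad a))
    have hkey := convex_dir_deriv_le hupper a b hD
    have hexp : ‖b - a‖ ^ 2 = ‖b‖ ^ 2 - 2 * ⟪a, b⟫ + ‖a‖ ^ 2 := by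
      rw [norm_sub_sq_real, real_inner_comm]
    have hab : ⟪a, b - a⟫ = ⟪a, b⟫ - ‖a‖ ^ 2 := by
      rw [inner_sub_right, real_inner_self_eq_norm_sq]
    rw [hexp]
    rw [hab] at hkey
    linarith [hkey]
  have hLo : ∀ a b : EuclideanSpace ℝ (Fin n),
      f a + ⟪f' a, b - a⟫ - L / 2 * ‖b - a‖ ^ 2 ≤ f b := by
    intro a b
    have hD : HasDerivAt (fun t : ℝ => f (a + t • (b - a)) - (-L) / 2 * ‖a + t • (b - a)‖ ^ 2)
        (⟪f' a, b - a⟫ - (-L) / 2 * (2 * ⟪a, b - a⟫)) 0 :=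
      (hasDerivAt_f_line a b (hgrad a)).sub ((hasDerivAt_normsq_line a b).const_mul ((-L) / 2))
    have hkey := convex_dir_deriv_le hlower a b hD
    have hexp : ‖b - a‖ ^ 2 = ‖b‖ ^ 2 - 2 * ⟪a, b⟫ + ‖a‖ ^ 2 := by
      rw [norm_sub_sq_real, real_inner_comm]
    have hab : ⟪a, b - a⟫ = ⟪a, b⟫ - ‖a‖ ^ 2 := by
      rw [inner_sub_right, real_inner_self_eq_norm_sq]
    rw [hexp]
    rw [hab] at hkey
    linarith [hkey]
  set u : EuclideanSpace ℝ (Fin n) := f' x1 with hu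
  set v : EuclideanSpace ℝ (Fin n) := f' x2 with hv
  set w : EuclideanSpace ℝ (Fin n) := xstar - x2 with hw
  set U : ℝ := ‖u‖ ^ 2 with hU
  set V : ℝ := ‖v‖ ^ 2 with hV
  set W : ℝ := ‖w‖ ^ 2 with hW
  set P : ℝ := ⟪u, w⟫ with hP
  set Q : ℝ := ⟪v, w⟫ with hQ
  -- interpolation inequality f x2 ≤ f x1 - U/(2L) - V/(4L)
  have hI : f x2 ≤ f x1 - 1 / (2 * L) * U - 1 / (4 * L) * V := by
    set z : EuclideanSpace ℝ (Fin n) := x2 + (1 / (2 * L)) • v with hz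
    have h1 := hLo x2 z
    have h2 := hUp x1 z
    rw [← hv] at h1
    rw [← hu] at h2
    have hz2 : z - x2 = (1 / (2 * L)) • v := by rw [hz]; abel
    have hz1 : z - x1 = ((-1) / L) • u + (1 / (2 * L)) • v := by
      rw [hz, hx2]; module
    have e1 : ⟪v, z - x2⟫ = 1 / (2 * L) * V := by
      rw [hz2, real_inner_smul_right, hV, real_inner_self_eq_norm_sq]
    have e2 : ‖z - x2‖ ^ 2 = (1 / (2 * L)) ^ 2 * V := by
      rw [hz2, norm_smul, Real.norm_eq_abs, mul_pow, sq_abs, hV]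
    have e3 : ⟪u, z - x1⟫ = (-1) / L * U + 1 / (2 * L) * ⟪u, v⟫ := by
      rw [hz1, inner_add_right, real_inner_smul_right, real_inner_smul_right,
        real_inner_self_eq_norm_sq, ← hU]
    have e4 : ‖z - x1‖ ^ 2 = 1 / L ^ 2 * U - 1 / L ^ 2 * ⟪u, v⟫
        + 1 / (4 * L ^ 2) * V := by
      rw [hz1, norm_add_sq_real, real_inner_smul_left, real_inner_smul_right,
        norm_smul, norm_smul]
      simp only [Real.norm_eq_abs, mul_pow, sq_abs]
      rw [← hU, ← hV]
      field_simp
      ring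
    rw [e1, e2] at h1
    rw [e3, e4] at h2
    have hV38 : 1 / (2 * L) * V - L / 2 * ((1 / (2 * L)) ^ 2 * V) = 3 / (8 * L) * V := by
      field_simp
      ring
    have hRHS : ((-1) / L * U + 1 / (2 * L) * ⟪u, v⟫)
        + L / 2 * (1 / L ^ 2 * U - 1 / L ^ 2 * ⟪u, v⟫ + 1 / (4 * L ^ 2) * V)
        = -(1 / (2 * L)) * U + 1 / (8 * L) * V := by
      field_simp
      ring
    have hcomb : f x2 + 3 / (8 * L) * V ≤ f x1 + (-(1 / (2 * L)) * U + 1 / (8 * L) * V) := by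
      calc f x2 + 3 / (8 * L) * V
          = f x2 + (1 / (2 * L) * V - L / 2 * ((1 / (2 * L)) ^ 2 * V)) := by rw [hV38]
        _ ≤ f z := by linarith [h1]
        _ ≤ f x1 + (-(1 / (2 * L)) * U + 1 / (8 * L) * V) := by
            rw [← hRHS]; linarith [h2]
    have hVpos : 0 ≤ 1 / (8 * L) * V ∧ 0 ≤ 3 / (8 * L) * V := by
      constructor <;> positivity
    have h14 : 1 / (4 * L) * V = 3 / (8 * L) * V - 1 / (8 * L) * V := by
      field_simp; ring
    linarith [hcomb]
  have hUnn : (0:ℝ) ≤ U := by rw [hU]; positivity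
  have hVnn : (0:ℝ) ≤ V := by rw [hV]; positivity
  have hWnn : (0:ℝ) ≤ W := by rw [hW]; positivity
  have hf2le : f x2 ≤ f x1 := by
    have p1 : 0 ≤ 1 / (2 * L) * U := by positivity
    have p2 : 0 ≤ 1 / (4 * L) * V := by positivity
    linarith [hI]
  -- quasar inequalities
  have hd1 : xstar - x1 = w - (1 / L) • u := by rw [hw, hx2]; module
  have hq1 := hqsc x1 le_rfl
  have hq2 := hqsc x2 hf2le
  have eq1 : ⟪u, xstar - x1⟫ = P - 1 / L * U := by
    rw [hd1, inner_sub_right, real_inner_smul_right, real_inner_self_eq_norm_sq, ← hU, ← hP]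
  have eq2 : ‖xstar - x1‖ ^ 2 = W - 2 * (1 / L) * P + (1 / L) ^ 2 * U := by
    rw [hd1, norm_sub_sq_real, real_inner_smul_right, norm_smul]
    simp only [Real.norm_eq_abs, mul_pow, sq_abs]
    rw [real_inner_comm u w]
    rw [← hU]
    rw [← hW]
    rw [← hP]
    ring
  rw [← hu, eq1, eq2] at hq1
  rw [← hv, ← hw, ← hQ, ← hW] at hq2
  -- the two nonnegative squares
  have hs1 : (0:ℝ) ≤ (1 - μs * γ / L) ^ 2 * U + 2 * ((1 - μs * γ / L) * (μs * γ)) * P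
      + (μs * γ) ^ 2 * W := by
    have h : (0:ℝ) ≤ ‖(1 - μs * γ / L) • u + (μs * γ) • w‖ ^ 2 := by positivity
    rw [norm_add_sq_real, real_inner_smul_left, real_inner_smul_right,
      norm_smul, norm_smul] at h
    simp only [Real.norm_eq_abs, mul_pow, sq_abs] at h
    rw [← hP] at h
    nlinarith [h]
  have hs2 : (0:ℝ) ≤ V + 2 * (μs * γ) * Q + (μs * γ) ^ 2 * W := by
    have h : (0:ℝ) ≤ ‖v + (μs * γ) • w‖ ^ 2 := by positivity
    rw [norm_add_sq_real, real_inner_smul_right, norm_smul] at h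
    simp only [Real.norm_eq_abs, mul_pow, sq_abs] at h
    rw [← hQ] at h
    nlinarith [h]
  -- final combination
  have hpos : (0:ℝ) < 2 * L + μs * γ ^ 2 := by positivity
  rw [div_mul_eq_mul_div, le_div_iff₀ hpos]
  have t1 : 0 ≤ 2 * (μs * γ ^ 2) * (f xstar - (f x1 + 1 / γ * (P - 1 / L * U)
      + μs / 2 * (W - 2 * (1 / L) * P + (1 / L) ^ 2 * U))) := by
    have hc : (0:ℝ) ≤ 2 * (μs * γ ^ 2) := by positivity
    exact mul_nonneg hc (by linarith [hq1])
  have t2 : 0 ≤ (μs * γ ^ 2) * (f xstar - (f x2 + 1 / γ * Q + μs / 2 * W)) := by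
    have hc : (0:ℝ) ≤ μs * γ ^ 2 := by positivity
    exact mul_nonneg hc (by linarith [hq2])
  have t3 : 0 ≤ 2 * L * (f x1 - 1 / (2 * L) * U - 1 / (4 * L) * V - f x2) := by
    have hc : (0:ℝ) ≤ 2 * L := by positivity
    exact mul_nonneg hc (by linarith [hI])
  have key : (2 * L - 2 * μs * γ ^ 2) * (f x1 - f xstar)
      - (f x2 - f xstar) * (2 * L + μs * γ ^ 2)
      = 2 * (μs * γ ^ 2) * (f xstar - (f x1 + 1 / γ * (P - 1 / L * U)
          + μs / 2 * (W - 2 * (1 / L) * P + (1 / L) ^ 2 * U)))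
        + (μs * γ ^ 2) * (f xstar - (f x2 + 1 / γ * Q + μs / 2 * W))
        + 2 * L * (f x1 - 1 / (2 * L) * U - 1 / (4 * L) * V - f x2)
        + ((1 - μs * γ / L) ^ 2 * U + 2 * ((1 - μs * γ / L) * (μs * γ)) * P
          + (μs * γ) ^ 2 * W)
        + (V + 2 * (μs * γ) * Q + (μs * γ) ^ 2 * W) / 2 := by
    field_simp
    ring
  linarith [t1, t2, t3, hs1, hs2, key.ge, key.le]
end
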